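/- Let (a_k)_{k≥0} and (η_k)_{k≥0} be sequences of nonnegative real numbers, and let C ≥ 0. Suppose Σ_{k=0}^{∞} η_k = ∞, Σ_{k=0}^{∞} η_k·a_k < ∞, and |a_{k+1} − a_k| ≤ C·η_k for all k. Then a_k → 0 as k → ∞. -/

import Mathlib

/-- Deterministic sequence lemma behind the conclusion of Theorem 2 of the
LICM-SGD paper: divergent weights, summability of the weighted sequence, and a
per-step change bound proportional to the step size force convergence to zero. -/
theorem tendsto_zero_of_summable_weighted_of_increment_bound
    (a η : ℕ → ℝ) (C : ℝ) (hC : 0 ≤ C)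
    (ha : ∀ k, 0 ≤ a k) (hη : ∀ k, 0 ≤ η k)
    (hdiv : Filter.Tendsto (fun n => ∑ k ∈ Finset.range n, η k)
      Filter.atTop Filter.atTop)
    (hsum : Summable (fun k => η k * a k))
    (hinc : ∀ k, |a (k + 1) - a k| ≤ C * η k) :
    Filter.Tendsto a Filter.atTop (nhds 0) := by
  have hnonsum : ¬ Summable η :=
    (not_summable_iff_tendsto_nat_atTop_of_nonneg hη).mpr hdiv
  rw [Metric.tendsto_atTop]
  intro ε hε
  have hC1 : (0:ℝ) < C + 1 := by linarith
  set δ : ℝ := (ε/2) * (ε / (4*(C+1))) with hδdef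
  have hδ : 0 < δ := by positivity
  obtain ⟨s, hs⟩ := hsum.vanishing (Metric.ball_mem_nhds 0 hδ)
  obtain ⟨N, hN⟩ := s.exists_nat_subset_range
  refine ⟨N, fun n hn => ?_⟩
  rw [Real.dist_eq, sub_zero, abs_of_nonneg (ha n)]
  by_contra hcon
  push_neg at hcon
  -- tail sums are small
  have htail : ∀ m, ∑ k ∈ Finset.Ico n m, η k * a k < δ := by
    intro m
    have hdisj : Disjoint (Finset.Ico n m) s := by
      refine Finset.disjoint_left.mpr fun k hk hks => ?_
      have h1 := hN hks
      simp only [Finset.mem_range] at h1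
      have h2 := (Finset.mem_Ico.mp hk).1
      omega
    have := hs _ hdisj
    rw [Metric.mem_ball, Real.dist_eq, sub_zero] at this
    calc ∑ k ∈ Finset.Ico n m, η k * a k
        ≤ |∑ k ∈ Finset.Ico n m, η k * a k| := le_abs_self _
      _ < δ := this
  -- there must exist m > n with a m < ε/2
  have hex : ∃ m, n < m ∧ a m < ε/2 := by
    by_contra h
    push_neg at h
    apply hnonsum
    rw [← summable_nat_add_iff (n+1)]
    have hs2 : Summable (fun k => (2/ε) * (η (k + (n+1)) * a (k + (n+1)))) :=
      (((summable_nat_add_iff (n+1)).mpr hsum)).mul_left _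
    refine hs2.of_nonneg_of_le (fun k => hη _) (fun k => ?_)
    have h1 : ε/2 ≤ a (k + (n+1)) := h _ (by omega)
    have h2 : 0 ≤ η (k + (n+1)) := hη _
    have h3 : η (k + (n+1)) * (ε/2) ≤ η (k + (n+1)) * a (k + (n+1)) :=
      mul_le_mul_of_nonneg_left h1 h2
    rw [div_mul_eq_mul_div, le_div_iff₀ hε]
    nlinarith
  classical
  set m := Nat.find hex with hm
  obtain ⟨hnm, ham⟩ : n < m ∧ a m < ε/2 := Nat.find_spec hex
  have hmid : ∀ k ∈ Finset.Ico n m, ε/2 ≤ a k := by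
    intro k hk
    obtain ⟨hk1, hk2⟩ := Finset.mem_Ico.mp hk
    rcases eq_or_lt_of_le hk1 with rfl | hlt
    · linarith
    · by_contra hak
      push_neg at hak
      exact Nat.find_min hex hk2 ⟨hlt, hak⟩
  set S : ℝ := ∑ k ∈ Finset.Ico n m, η k with hS
  have hS0 : 0 ≤ S := Finset.sum_nonneg fun k _ => hη k
  -- S is small
  have hSsmall : S < ε / (4*(C+1)) := by
    have h1 : (ε/2) * S ≤ ∑ k ∈ Finset.Ico n m, η k * a k := by
      rw [hS, Finset.mul_sum]
      refine Finset.sum_le_sum fun k hk => ?_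
      have := hmid k hk
      have := hη k
      nlinarith
    have h2 := htail m
    have hεp : 0 < ε/2 := by linarith
    nlinarith
  -- telescoping bound
  have htel : a m - a n = ∑ k ∈ Finset.Ico n m, (a (k+1) - a k) := by
    rw [Finset.sum_Ico_eq_sub _ (le_of_lt hnm), Finset.sum_range_sub, Finset.sum_range_sub]
    ring
  have hbound : |a m - a n| ≤ C * S := by
    rw [htel]
    calc |∑ k ∈ Finset.Ico n m, (a (k+1) - a k)|
        ≤ ∑ k ∈ Finset.Ico n m, |a (k+1) - a k| := Finset.abs_sum_le_sum_abs _ _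
      _ ≤ ∑ k ∈ Finset.Ico n m, C * η k := Finset.sum_le_sum fun k _ => hinc k
      _ = C * S := by rw [hS, Finset.mul_sum]
  have hdrop : ε/2 ≤ |a m - a n| := by
    rw [abs_sub_comm, abs_of_nonneg (by linarith)]
    linarith
  have h4 : (C+1) * (ε/(4*(C+1))) = ε/4 := by field_simp
  nlinarith [mul_lt_mul_of_pos_left hSsmall hC1]
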